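/- For any x ∈ [0,1] not dyadic, there exist δ > 0 and δ' = 1/(2^{1-α} - 1) such that for every n ∈ ℕ there exists J ≥ n with δ·2^{J(1-α)} < |C_{J-1}(x)| < δ'·2^{J(1-α)}, where C_{J-1}(x) = Σ_{j=0}^{J-1} (-1)^{i_{j+1}(x)} 2^{(1-α)j}. -/

import Mathlib

open Real

noncomputable def digit (x : ℝ) (j : ℕ) : ℕ := (⌊(2:ℝ) ^ j * x⌋).toNat % 2

noncomputable def knoppSlope (α x : ℝ) (n : ℕ) : ℝ :=
  ∑ j ∈ Finset.range n, (-1:ℝ) ^ (digit x (j+1)) * (2:ℝ) ^ ((1-α) * (j:ℝ))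

def isDyadic (x : ℝ) : Prop := ∃ K N : ℕ, Odd K ∧ x = (K:ℝ) / 2 ^ N

theorem slope_bounds (α : ℝ) (hα : 0 < α) (hα1 : α < 1)
    (x : ℝ) (hx : x ∈ Set.Icc (0:ℝ) 1) (hnd : ¬ isDyadic x) :
    ∃ δ > 0, ∀ n : ℕ, ∃ J : ℕ, n ≤ J ∧
      δ * (2:ℝ) ^ ((J:ℝ) * (1-α)) < |knoppSlope α x J| ∧
      |knoppSlope α x J| < (1 / ((2:ℝ) ^ (1-α) - 1)) * (2:ℝ) ^ ((J:ℝ) * (1-α)) := by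
  have h2 : (0:ℝ) < 2 := by norm_num
  set r : ℝ := (2:ℝ) ^ (1-α) with hrdef
  have hr1 : 1 < r := by
    rw [hrdef]
    exact (Real.one_lt_rpow_iff_of_pos h2).mpr (Or.inl ⟨by norm_num, by linarith⟩)
  have hr0 : 0 < r := lt_trans one_pos hr1
  have hpow : ∀ j : ℕ, (2:ℝ) ^ ((1-α) * (j:ℝ)) = r ^ j := by
    intro j
    rw [hrdef, Real.rpow_mul (le_of_lt h2), Real.rpow_natCast]
  have hpow' : ∀ J : ℕ, (2:ℝ) ^ ((J:ℝ) * (1-α)) = r ^ J := by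
    intro J; rw [mul_comm]; exact hpow J
  have hterm : ∀ j : ℕ, |(-1:ℝ) ^ (digit x (j+1)) * (2:ℝ) ^ ((1-α) * (j:ℝ))| = r ^ j := by
    intro j
    rw [abs_mul, abs_pow, abs_neg, abs_one, one_pow, one_mul, hpow j,
      abs_of_pos (pow_pos hr0 j)]
  have hub : ∀ J : ℕ, |knoppSlope α x J| < (1/(r-1)) * r ^ J := by
    intro J
    calc |knoppSlope α x J| ≤ ∑ j ∈ Finset.range J, r ^ j := by
          refine (Finset.abs_sum_le_sum_abs _ _).trans ?_
          exact le_of_eq (Finset.sum_congr rfl fun j _ => hterm j)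
      _ = (r ^ J - 1)/(r-1) := geom_sum_eq (ne_of_gt hr1) J
      _ < r ^ J / (r-1) := by gcongr <;> linarith
      _ = (1/(r-1)) * r ^ J := by ring
  refine ⟨1/(4*r), by positivity, fun n => ?_⟩
  have hpn : (0:ℝ) < r ^ n := pow_pos hr0 n
  by_cases hc : (1/2) * r ^ n < |knoppSlope α x n|
  · refine ⟨n, le_refl n, ?_, ?_⟩
    · rw [hpow' n]
      have hδlt : 1/(4*r) < 1/2 := by
        rw [div_lt_div_iff₀ (by linarith) (by norm_num)]; linarith
      calc 1/(4*r) * r ^ n < 1/2 * r ^ n := by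
            exact mul_lt_mul_of_pos_right hδlt hpn
        _ < |knoppSlope α x n| := hc
    · rw [hpow' n]; exact hub n
  · push_neg at hc
    have hrec : knoppSlope α x (n+1) - knoppSlope α x n
        = (-1:ℝ) ^ (digit x (n+1)) * (2:ℝ) ^ ((1-α) * (n:ℝ)) := by
      rw [knoppSlope, knoppSlope, Finset.sum_range_succ]; ring
    have hdiff : |knoppSlope α x (n+1) - knoppSlope α x n| = r ^ n := by
      rw [hrec]; exact hterm n
    have htri : |knoppSlope α x (n+1) - knoppSlope α x n|
        ≤ |knoppSlope α x (n+1)| + |knoppSlope α x n| := abs_sub _ _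
    have hkey : (1/2) * r ^ n ≤ |knoppSlope α x (n+1)| := by
      rw [hdiff] at htri; linarith
    refine ⟨n+1, Nat.le_succ n, ?_, ?_⟩
    · rw [hpow' (n+1)]
      have heq : 1/(4*r) * r ^ (n+1) = r ^ n / 4 := by
        rw [pow_succ]; field_simp
      rw [heq]; linarith
    · rw [hpow' (n+1)]; exact hub (n+1)
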